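/- Fix j ∈ ℂ and let f : ℝ → ℂ be twice differentiable. With the λ-representation operators (ℓ₁f)(q) = −i·(sin q·f'(q) − j·cos q·f(q)), (ℓ₂f)(q) = −i·(cos q·f'(q) + j·sin q·f(q)), (ℓ₃f)(q) = f'(q), the Casimir operator acts as a scalar: ℓ₁(ℓ₁f) + ℓ₂(ℓ₂f) + ℓ₃(ℓ₃f) = −j·(j+1)·f, pointwise on ℝ. -/

import Mathlib

/-- The λ-representation operator `ℓ₁ = −i(sin q·∂_q − j·cos q)`. -/
noncomputable def ell1 (j : ℂ) (f : ℝ → ℂ) : ℝ → ℂ :=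
  fun q => -Complex.I * ((Real.sin q : ℂ) * deriv f q - j * (Real.cos q : ℂ) * f q)

/-- The λ-representation operator `ℓ₂ = −i(cos q·∂_q + j·sin q)`. -/
noncomputable def ell2 (j : ℂ) (f : ℝ → ℂ) : ℝ → ℂ :=
  fun q => -Complex.I * ((Real.cos q : ℂ) * deriv f q + j * (Real.sin q : ℂ) * f q)

/-- The λ-representation operator `ℓ₃ = ∂_q`. -/
noncomputable def ell3 (f : ℝ → ℂ) : ℝ → ℂ :=
  fun q => deriv f q

lemma deriv_ell1 (j : ℂ) (f : ℝ → ℂ) (hf : Differentiable ℝ f)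
    (hf' : Differentiable ℝ (deriv f)) (q : ℝ) :
    deriv (ell1 j f) q = -Complex.I * (((Real.cos q : ℂ)) * deriv f q
      + (Real.sin q : ℂ) * deriv (deriv f) q
      - j * ((-(Real.sin q : ℂ)) * f q + (Real.cos q : ℂ) * deriv f q)) := by
  have hsin : HasDerivAt (fun q : ℝ => ((Real.sin q : ℂ))) (Real.cos q) q :=
    (Real.hasDerivAt_sin q).ofReal_comp
  have hcos : HasDerivAt (fun q : ℝ => ((Real.cos q : ℂ))) (-(Real.sin q)) q := by
    simpa using (Real.hasDerivAt_cos q).ofReal_comp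
  have h : HasDerivAt (ell1 j f)
      (-Complex.I * (((Real.cos q : ℂ)) * deriv f q
      + (Real.sin q : ℂ) * deriv (deriv f) q
      - j * ((-(Real.sin q : ℂ)) * f q + (Real.cos q : ℂ) * deriv f q))) q := by
    have := (((hsin.mul ((hf' q).hasDerivAt))).sub
      (((hasDerivAt_const q j).mul hcos).mul ((hf q).hasDerivAt))).const_mul (-Complex.I)
    convert this using 1
    · rfl
    · rfl
    · push_cast
      simp only [Pi.mul_apply]
      ring
  exact h.deriv

lemma deriv_ell2 (j : ℂ) (f : ℝ → ℂ) (hf : Differentiable ℝ f)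
    (hf' : Differentiable ℝ (deriv f)) (q : ℝ) :
    deriv (ell2 j f) q = -Complex.I * ((-(Real.sin q : ℂ)) * deriv f q
      + (Real.cos q : ℂ) * deriv (deriv f) q
      + j * ((Real.cos q : ℂ) * f q + (Real.sin q : ℂ) * deriv f q)) := by
  have hsin : HasDerivAt (fun q : ℝ => ((Real.sin q : ℂ))) (Real.cos q) q :=
    (Real.hasDerivAt_sin q).ofReal_comp
  have hcos : HasDerivAt (fun q : ℝ => ((Real.cos q : ℂ))) (-(Real.sin q)) q := by
    simpa using (Real.hasDerivAt_cos q).ofReal_comp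
  have h : HasDerivAt (ell2 j f)
      (-Complex.I * ((-(Real.sin q : ℂ)) * deriv f q
      + (Real.cos q : ℂ) * deriv (deriv f) q
      + j * ((Real.cos q : ℂ) * f q + (Real.sin q : ℂ) * deriv f q))) q := by
    have := (((hcos.mul ((hf' q).hasDerivAt))).add
      (((hasDerivAt_const q j).mul hsin).mul ((hf q).hasDerivAt))).const_mul (-Complex.I)
    convert this using 1
    · rfl
    · rfl
    · push_cast
      simp only [Pi.mul_apply]
      ring
  exact h.deriv

/-- The Casimir operator of the λ-representation of `so(3)` acts as the scalar
`−j(j+1)`: for twice differentiable `f`, `ℓ₁²f + ℓ₂²f + ℓ₃²f = −j(j+1)·f` pointwise. -/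
theorem so3_lambda_representation_casimir (j : ℂ) (f : ℝ → ℂ)
    (hf : Differentiable ℝ f) (hf' : Differentiable ℝ (deriv f)) (q : ℝ) :
    ell1 j (ell1 j f) q + ell2 j (ell2 j f) q + ell3 (ell3 f) q = -j * (j + 1) * f q := by
  have he3 : ell3 f = deriv f := rfl
  simp only [ell1, ell2, ell3, he3]
  rw [deriv_ell1 j f hf hf' q, deriv_ell2 j f hf hf' q]
  have hs : ((Real.sin q : ℂ))^2 + ((Real.cos q : ℂ))^2 = 1 := by
    exact_mod_cast congrArg Complex.ofReal (Real.sin_sq_add_cos_sq q)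
  have hI : Complex.I * Complex.I = -1 := Complex.I_mul_I
  linear_combination ((Real.sin q:ℂ)^2 + (Real.cos q:ℂ)^2) *
      (deriv (deriv f) q + j * f q + j^2 * f q) * hI
    - (deriv (deriv f) q + j * f q + j^2 * f q) * hs
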